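/- Let s ≥ 1, n = s+2, S ∈ ℝ^{n×n}, u₀ ∈ ℝⁿ, c₁,…,c_s ∈ ℝ, h > 0, z ∈ ℝ, and y₀, y₀' ∈ ℝ. Let W ∈ ℝ^{n×n} be the matrix whose columns are u₀, S·u₀, and ((hS)² − z·I)·exp(c_i h S)·u₀ for i = 1,…,s, and assume W is invertible. Define the row vector μᵀ := (y₀, y₀', 0, …, 0)·W^{-1} and the function u(t) := μᵀ·exp(tS)·u₀. Then u(0) = y₀, u'(0) = y₀', h²·u''(c_i h) = z·u(c_i h) for i = 1,…,s, and the vector (u(h), h·u'(h))ᵀ equals M·(y₀, h·y₀')ᵀ, where M is the 2×2 matrix with entries M₁₁ = e₁ᵀW^{-1}exp(hS)u₀, M₁₂ = h^{-1}·e₂ᵀW^{-1}exp(hS)u₀, M₂₁ = h·e₁ᵀW^{-1}S·exp(hS)u₀, M₂₂ = e₂ᵀW^{-1}S·exp(hS)u₀, with e₁, e₂ the first two standard basis vectors of ℝⁿ. -/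

import Mathlib

open Matrix BigOperators

theorem stmt_14 (s : ℕ) (hs : 1 ≤ s)
    (S : Matrix (Fin (s + 2)) (Fin (s + 2)) ℝ) (u₀ : Fin (s + 2) → ℝ)
    (c : Fin s → ℝ) (h : ℝ) (hh : 0 < h) (z y₀ y₀' : ℝ)
    (W : Matrix (Fin (s + 2)) (Fin (s + 2)) ℝ)
    (hW : W = (Matrix.of
      (Fin.cons u₀ (Fin.cons (S *ᵥ u₀) fun i : Fin s =>
        ((h • S) ^ 2 - z • (1 : Matrix (Fin (s + 2)) (Fin (s + 2)) ℝ)) *ᵥ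
          (NormedSpace.exp ((c i * h) • S) *ᵥ u₀))))ᵀ)
    (hWinv : IsUnit W.det)
    (μ : Fin (s + 2) → ℝ)
    (hμ : μ = (Fin.cons y₀ (Fin.cons y₀' (0 : Fin s → ℝ)) : Fin (s + 2) → ℝ) ᵥ* W⁻¹)
    (uu uu' uu'' : ℝ → ℝ)
    (huu : uu = fun t => μ ⬝ᵥ (NormedSpace.exp (t • S) *ᵥ u₀))
    (huu' : uu' = fun t => μ ⬝ᵥ (S *ᵥ (NormedSpace.exp (t • S) *ᵥ u₀)))
    (huu'' : uu'' = fun t => μ ⬝ᵥ (S *ᵥ S *ᵥ (NormedSpace.exp (t • S) *ᵥ u₀))) :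
    uu 0 = y₀ ∧ uu' 0 = y₀' ∧
    (∀ i, h ^ 2 * uu'' (c i * h) = z * uu (c i * h)) ∧
    uu h = (W⁻¹ *ᵥ (NormedSpace.exp (h • S) *ᵥ u₀)) 0 * y₀
        + (h⁻¹ * (W⁻¹ *ᵥ (NormedSpace.exp (h • S) *ᵥ u₀)) 1) * (h * y₀') ∧
    h * uu' h = (h * (W⁻¹ *ᵥ (S *ᵥ (NormedSpace.exp (h • S) *ᵥ u₀))) 0) * y₀
        + (W⁻¹ *ᵥ (S *ᵥ (NormedSpace.exp (h • S) *ᵥ u₀))) 1 * (h * y₀') := by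
  have hne : h ≠ 0 := ne_of_gt hh
  set v : Fin (s + 2) → ℝ := Fin.cons y₀ (Fin.cons y₀' (0 : Fin s → ℝ)) with hv
  have hμW : μ ᵥ* W = v := by
    rw [hμ, Matrix.vecMul_vecMul, Matrix.nonsing_inv_mul W hWinv, Matrix.vecMul_one]
  have key : ∀ j, μ ⬝ᵥ (fun i => W i j) = v j := by
    intro j
    have := congrFun hμW j
    simpa [Matrix.vecMul, dotProduct] using this
  have hone : (1 : Fin (s + 2)) = Fin.succ 0 := by
    ext; simp [Fin.val_one]
  -- part 1
  have p1 : uu 0 = y₀ := by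
    have := key 0
    simp only [hW, Matrix.transpose_apply, Matrix.of_apply, Fin.cons_zero] at this
    simpa [huu, NormedSpace.exp_zero, hv] using this
  have p2 : uu' 0 = y₀' := by
    have := key 1
    rw [hone] at this
    simp only [hW, Matrix.transpose_apply, Matrix.of_apply, Fin.cons_succ, Fin.cons_zero] at this
    simpa [huu', NormedSpace.exp_zero, hv] using this
  have p3 : ∀ i, h ^ 2 * uu'' (c i * h) = z * uu (c i * h) := by
    intro i
    have := key i.succ.succ
    simp only [hW, Matrix.transpose_apply, Matrix.of_apply, Fin.cons_succ] at this
    simp only [Matrix.sub_mulVec, smul_pow, sq, Matrix.smul_mulVec,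
      Matrix.one_mulVec, ← Matrix.mulVec_mulVec,
      dotProduct_sub, dotProduct_smul, hv, Fin.cons_succ,
      Pi.zero_apply, smul_eq_mul, Matrix.mulVec_smul] at this
    simp only [huu, huu'']
    linarith [this]
  -- dot product decomposition
  have vdot : ∀ x : Fin (s + 2) → ℝ, μ ⬝ᵥ x = y₀ * (W⁻¹ *ᵥ x) 0 + y₀' * (W⁻¹ *ᵥ x) 1 := by
    intro x
    rw [hμ, ← Matrix.dotProduct_mulVec]
    rw [hone]
    simp [hv, dotProduct, Fin.sum_univ_succ, Fin.cons_succ, Fin.cons_zero]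
  refine ⟨p1, p2, p3, ?_, ?_⟩
  · simp only [huu]
    rw [vdot]
    field_simp
  · simp only [huu']
    rw [vdot]
    field_simp
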